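/- Let m be an even positive integer, let g be a bent function on F_{2^{m−1}} × F_2 with g(0,0) = g(0,1) = 0, let u, μ₁, μ₂ ∈ F_2 and b ∈ F_{2^{m−1}} \ F_2, and set W = Σ_{(λ₁,λ₂) ∈ F_{2^{m−1}} × F_{2^{m−1}}} W_g(b λ₁ + λ₂, u) (−1)^{Tr^{m−1}_1(μ₁ λ₁ + μ₂ λ₂)}. Then W = 2^{2m−1} if μ₁ = μ₂ = u = 0, and W = 0 otherwise. -/

import Mathlib

open Finset

noncomputable section

abbrev Fq (n : ℕ) := GaloisField 2 n

noncomputable instance (n : ℕ) : Fintype (Fq n) := Fintype.ofFinite _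

/-- Absolute trace from `F_{2^n}` to `F_2`. -/
noncomputable def tr1 (n : ℕ) (x : Fq n) : ZMod 2 :=
  Algebra.trace (ZMod 2) (Fq n) x

/-- `(-1)^x` for `x : F_2`, as an integer. -/
def chi (x : ZMod 2) : ℤ := (-1 : ℤ) ^ x.val

/-- Walsh transform of a Boolean function on `F_{2^n} × F_2`. -/
noncomputable def walsh (n : ℕ) (f : Fq n × ZMod 2 → ZMod 2)
    (lam : Fq n) (nu : ZMod 2) : ℤ :=
  ∑ x : Fq n × ZMod 2, chi (f x + tr1 n (lam * x.1) + nu * x.2)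

/-- A Boolean function on `F_{2^{m-1}} × F_2` is bent if all its Walsh coefficients
are `± 2^(m/2)`. -/
def IsBent (m : ℕ) (f : Fq (m - 1) × ZMod 2 → ZMod 2) : Prop :=
  ∀ lam nu, walsh (m - 1) f lam nu = 2 ^ (m / 2) ∨ walsh (m - 1) f lam nu = -(2 ^ (m / 2))

/-- Cyclic bent function on `F_{2^{m-1}} × F_2`. -/
def IsCyclicBent (m : ℕ) (f : Fq (m - 1) × ZMod 2 → ZMod 2) : Prop :=
  ∀ a b : Fq (m - 1), a ≠ b → ∀ ε : ZMod 2,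
    IsBent m fun x => f (a * x.1, x.2) + f (b * x.1, x.2 + ε)

noncomputable instance (n : ℕ) : DecidableEq (Fq n) := Classical.decEq _

lemma chi_add : ∀ a b : ZMod 2, chi (a + b) = chi a * chi b := by decide

lemma chi_zero : chi 0 = 1 := by decide

lemma chi_one : chi 1 = -1 := by decide

lemma tr1_add (n : ℕ) (a b : Fq n) : tr1 n (a + b) = tr1 n a + tr1 n b :=
  map_add (Algebra.trace (ZMod 2) (Fq n)) a b

lemma zmod2_cases : ∀ z : ZMod 2, z = 0 ∨ z = 1 := by decide

lemma sum_zmod2 (F : ZMod 2 → ℤ) : ∑ x : ZMod 2, F x = F 0 + F 1 := by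
  rw [show (univ : Finset (ZMod 2)) = {0, 1} by decide,
    Finset.sum_pair (by decide : (0 : ZMod 2) ≠ 1)]

/-- Character orthogonality on `F_{2^n}`. -/
lemma ortho (n : ℕ) (hn : n ≠ 0) (c : Fq n) :
    ∑ l : Fq n, chi (tr1 n (l * c)) = if c = 0 then ((2 : ℤ) ^ n) else 0 := by
  split_ifs with hc
  · subst hc
    have h0 : ∀ l : Fq n, tr1 n (l * 0) = 0 := fun l => by
      rw [mul_zero]; exact map_zero (Algebra.trace (ZMod 2) (Fq n))
    simp only [h0, chi_zero]
    rw [Finset.sum_const, Finset.card_univ]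
    have hcard : Fintype.card (Fq n) = 2 ^ n := by
      rw [Fintype.card_eq_nat_card]; exact GaloisField.card 2 n hn
    rw [hcard, nsmul_eq_mul, mul_one]; push_cast; ring
  · obtain ⟨d, hd⟩ : ∃ d : Fq n, tr1 n (d * c) = 1 := by
      have htr := (traceForm_nondegenerate (ZMod 2) (Fq n)).1 c
      simp_rw [Algebra.traceForm_apply] at htr
      by_contra! hf
      refine hc (htr fun y => ?_)
      have hy := hf y
      rcases zmod2_cases (Algebra.trace (ZMod 2) (Fq n) (c * y)) with h | h
      · exact h
      · exact absurd (by unfold tr1; rw [mul_comm]; exact h) hy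
    have key : ∑ l : Fq n, chi (tr1 n ((l + d) * c)) = ∑ l : Fq n, chi (tr1 n (l * c)) :=
      Fintype.sum_equiv (Equiv.addRight d) _ _ (fun l => rfl)
    have expand : ∀ l : Fq n, chi (tr1 n ((l + d) * c)) = - chi (tr1 n (l * c)) := by
      intro l
      have e : (l + d) * c = l * c + d * c := by ring
      rw [e, tr1_add, chi_add, hd, chi_one]; ring
    simp only [expand, Finset.sum_neg_distrib] at key
    linarith

/-- evaluation of the twisted Walsh sum
`W = Σ_{(λ₁,λ₂)} W_g(b λ₁ + λ₂, u) (-1)^{Tr(μ₁ λ₁ + μ₂ λ₂)}` for a bent function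
`g` with `g(0,0) = g(0,1) = 0`, `b ∉ F_2` and `u, μ₁, μ₂ ∈ F_2`. -/
theorem stmt13 (m : ℕ) (hm : Even m) (hm0 : 0 < m)
    (g : Fq (m - 1) × ZMod 2 → ZMod 2) (hg : IsBent m g)
    (h00 : g (0, 0) = 0) (h01 : g (0, 1) = 0)
    (u μ₁ μ₂ : ZMod 2) (b : Fq (m - 1)) (hb0 : b ≠ 0) (hb1 : b ≠ 1) :
    (∑ p : Fq (m - 1) × Fq (m - 1),
        walsh (m - 1) g (b * p.1 + p.2) u
          * chi (tr1 (m - 1) (algebraMap (ZMod 2) (Fq (m - 1)) μ₁ * p.1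
              + algebraMap (ZMod 2) (Fq (m - 1)) μ₂ * p.2)))
      = if μ₁ = 0 ∧ μ₂ = 0 ∧ u = 0 then 2 ^ (2 * m - 1) else 0 := by
  have hm2 : 2 ≤ m := by obtain ⟨k, rfl⟩ := hm; omega
  have hn : m - 1 ≠ 0 := by omega
  set μ₁' := algebraMap (ZMod 2) (Fq (m - 1)) μ₁ with hμ₁'
  set μ₂' := algebraMap (ZMod 2) (Fq (m - 1)) μ₂ with hμ₂'
  have h2 : (1 : Fq (m - 1)) + 1 = 0 := by
    have h : ((1 : ZMod 2) + 1) = 0 := by decide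
    calc (1 : Fq (m - 1)) + 1 = algebraMap (ZMod 2) (Fq (m - 1)) (1 + 1) := by
          rw [map_add, map_one]
      _ = 0 := by rw [h, map_zero]
  have hyy : ∀ y : Fq (m - 1), y + y = 0 := fun y => by linear_combination y * h2
  -- Step 1: expand the Walsh transform and reorganize the exponent
  have key : ∀ p : Fq (m - 1) × Fq (m - 1),
      walsh (m - 1) g (b * p.1 + p.2) u * chi (tr1 (m - 1) (μ₁' * p.1 + μ₂' * p.2))
      = ∑ x : Fq (m - 1) × ZMod 2, chi (g x + u * x.2) *
          (chi (tr1 (m - 1) (p.1 * (b * x.1 + μ₁'))) *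
            chi (tr1 (m - 1) (p.2 * (x.1 + μ₂')))) := by
    intro p
    rw [walsh, Finset.sum_mul]
    refine Finset.sum_congr rfl fun x _ => ?_
    rw [← chi_add, ← chi_add, ← chi_add]
    congr 1
    have e1 : (b * p.1 + p.2) * x.1 = p.1 * (b * x.1) + p.2 * x.1 := by ring
    have e2 : μ₁' * p.1 + μ₂' * p.2 = p.1 * μ₁' + p.2 * μ₂' := by ring
    have e3 : p.1 * (b * x.1 + μ₁') = p.1 * (b * x.1) + p.1 * μ₁' := by ring
    have e4 : p.2 * (x.1 + μ₂') = p.2 * x.1 + p.2 * μ₂' := by ring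
    rw [e1, e2, e3, e4, tr1_add, tr1_add, tr1_add, tr1_add]
    ring
  rw [Finset.sum_congr rfl fun p _ => key p, Finset.sum_comm]
  -- Step 2: factor the inner sum over p
  have prod_sum : ∀ (A B : Fq (m - 1) → ℤ),
      ∑ p : Fq (m - 1) × Fq (m - 1), A p.1 * B p.2
        = (∑ l : Fq (m - 1), A l) * (∑ l : Fq (m - 1), B l) := by
    intro A B
    rw [Finset.sum_mul_sum, ← Finset.univ_product_univ, Finset.sum_product]
  have step2 : ∀ x : Fq (m - 1) × ZMod 2,
      (∑ p : Fq (m - 1) × Fq (m - 1), chi (g x + u * x.2) *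
        (chi (tr1 (m - 1) (p.1 * (b * x.1 + μ₁'))) *
          chi (tr1 (m - 1) (p.2 * (x.1 + μ₂')))))
      = chi (g x + u * x.2) *
          ((if b * x.1 + μ₁' = 0 then (2 : ℤ) ^ (m - 1) else 0) *
            (if x.1 + μ₂' = 0 then (2 : ℤ) ^ (m - 1) else 0)) := by
    intro x
    rw [← Finset.mul_sum]
    congr 1
    rw [← ortho (m - 1) hn (b * x.1 + μ₁'), ← ortho (m - 1) hn (x.1 + μ₂')]
    exact prod_sum (fun l => chi (tr1 (m - 1) (l * (b * x.1 + μ₁'))))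
      (fun l => chi (tr1 (m - 1) (l * (x.1 + μ₂'))))
  rw [Finset.sum_congr rfl fun x _ => step2 x]
  -- Step 3: merge the two indicator conditions
  have hx : ∀ y z : Fq (m - 1), y + z = 0 ↔ y = z := by
    intro y z
    constructor
    · intro h; have h' := hyy z; linear_combination h - h'
    · rintro rfl; exact hyy _
  have step3 : ∀ x : Fq (m - 1) × ZMod 2,
      chi (g x + u * x.2) *
          ((if b * x.1 + μ₁' = 0 then (2 : ℤ) ^ (m - 1) else 0) *
            (if x.1 + μ₂' = 0 then (2 : ℤ) ^ (m - 1) else 0))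
      = if x.1 = μ₂' ∧ b * μ₂' + μ₁' = 0 then
          chi (g x + u * x.2) * ((2 : ℤ) ^ (m - 1) * (2 : ℤ) ^ (m - 1)) else 0 := by
    intro x
    by_cases h1 : x.1 = μ₂'
    · rw [h1, if_pos (hyy μ₂')]
      by_cases hC : b * μ₂' + μ₁' = 0
      · rw [if_pos hC, if_pos ⟨rfl, hC⟩]
      · rw [if_neg hC, if_neg (fun h => hC h.2)]; ring
    · rw [if_neg (show ¬(x.1 + μ₂' = 0) from fun h => h1 ((hx _ _).mp h)),
        if_neg (show ¬(x.1 = μ₂' ∧ b * μ₂' + μ₁' = 0) from fun h => h1 h.1)]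
      ring
  rw [Finset.sum_congr rfl fun x _ => step3 x]
  -- Step 4: evaluate
  by_cases hC : b * μ₂' + μ₁' = 0
  · -- then μ₁ = μ₂ = 0
    have hμ2 : μ₂ = 0 := by
      rcases zmod2_cases μ₂ with h | h
      · exact h
      · exfalso
        rw [hμ₂', h, map_one] at hC
        rcases zmod2_cases μ₁ with h' | h'
        · rw [hμ₁', h', map_zero] at hC
          exact hb0 (by linear_combination hC)
        · rw [hμ₁', h', map_one] at hC
          exact hb1 (by linear_combination hC - h2)
    have hμ1 : μ₁ = 0 := by
      rcases zmod2_cases μ₁ with h | h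
      · exact h
      · exfalso
        rw [hμ₂', hμ2, map_zero, hμ₁', h, map_one, mul_zero, zero_add] at hC
        exact one_ne_zero hC
    have e₁ : μ₁' = 0 := by rw [hμ₁', hμ1, map_zero]
    have e₂ : μ₂' = 0 := by rw [hμ₂', hμ2, map_zero]
    have hcond : ∀ x : Fq (m - 1) × ZMod 2,
        (x.1 = μ₂' ∧ b * μ₂' + μ₁' = 0) ↔ x.1 = 0 := by
      intro x
      constructor
      · exact fun h => by rw [h.1, e₂]
      · exact fun h => ⟨by rw [h, e₂], hC⟩
    simp only [hcond]
    have final_sum : ∀ F : Fq (m - 1) × ZMod 2 → ℤ,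
        (∑ x : Fq (m - 1) × ZMod 2, if x.1 = 0 then F x else 0) = F (0, 0) + F (0, 1) := by
      intro F
      rw [Fintype.sum_prod_type]
      rw [Finset.sum_eq_single (0 : Fq (m - 1))]
      · simp only [if_pos rfl]
        exact sum_zmod2 _
      · intro c _ hc
        simp [hc]
      · intro h
        exact absurd (Finset.mem_univ _) h
    rw [final_sum]
    rcases zmod2_cases u with hu | hu
    · rw [if_pos ⟨hμ1, hμ2, hu⟩]
      simp only [hu, h00, h01, mul_zero, mul_one, zero_mul, add_zero, zero_add, chi_zero]
      have hexp : 2 * m - 1 = (m - 1) + (m - 1) + 1 := by omega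
      rw [hexp, pow_succ, pow_add]
      ring
    · rw [if_neg (fun h => by rw [hu] at h; exact one_ne_zero h.2.2)]
      simp only [hu, h00, h01, mul_zero, mul_one, zero_mul, add_zero, zero_add,
        chi_zero, chi_one]
      ring
  · have hz : ∀ x : Fq (m - 1) × ZMod 2,
        (if x.1 = μ₂' ∧ b * μ₂' + μ₁' = 0 then
          chi (g x + u * x.2) * ((2 : ℤ) ^ (m - 1) * (2 : ℤ) ^ (m - 1)) else 0) = 0 := fun x =>
      if_neg (fun h => hC h.2)
    rw [Finset.sum_congr rfl fun x _ => hz x, Finset.sum_const, smul_zero]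
    rw [if_neg]
    rintro ⟨hq1, hq2, _⟩
    exact hC (by rw [hμ₁', hμ₂', hq1, hq2, map_zero, mul_zero, add_zero])
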